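/- Let s_i ≥ s_j > γ > 0 with i < j (so s_i ≥ s_j), b = (1/γ − (s_i+s_j)/(2 s_i s_j))(s_i − s_j), κ_{ij} = −(√(1+b²) − b), and κ_{ji} = √(1+b²) − b. Then Z_{ij} = κ_{ij} v_i v_j^T + v_j v_i^T satisfies −γ Z_{ij}^T + 2 Z_{ij} Σ − γ Σ^{-1} Z_{ij} Σ = λ_{ij} Z_{ij} with λ_{ij} = 2 s_i − γ(s_i/s_j + κ_{ij}), where v_i, v_j are orthonormal eigenvectors of Σ with eigenvalues s_i, s_j. -/

import Mathlib

open Matrix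

lemma mul_vecMulVec' {n : ℕ} (M : Matrix (Fin n) (Fin n) ℝ) (a b : Fin n → ℝ) :
    M * vecMulVec a b = vecMulVec (M *ᵥ a) b := by
  ext i k
  simp [mul_apply, vecMulVec_apply, mulVec, dotProduct, Finset.sum_mul, mul_assoc]

/-- Off-diagonal Hessian eigenvectors: `Z = κ v_i v_jᵀ + v_j v_iᵀ` satisfies
`-γ Zᵀ + 2 Z Σ - γ Σ⁻¹ Z Σ = λ Z` with `λ = 2 s_i - γ (s_i / s_j + κ)`. -/
theorem stmt_10 {n : ℕ} (γ si sj : ℝ) (hγ : 0 < γ) (hsj : γ < sj) (hij : sj ≤ si)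
    (b κ : ℝ) (hb : b = (1 / γ - (si + sj) / (2 * si * sj)) * (si - sj))
    (hκ : κ = -(Real.sqrt (1 + b ^ 2) - b))
    (Sig : Matrix (Fin n) (Fin n) ℝ) (hSig : Sig.PosDef)
    (vi vj : Fin n → ℝ)
    (hvi : vi ⬝ᵥ vi = 1) (hvj : vj ⬝ᵥ vj = 1) (horth : vi ⬝ᵥ vj = 0)
    (heigi : Sig *ᵥ vi = si • vi) (heigj : Sig *ᵥ vj = sj • vj)
    (Z : Matrix (Fin n) (Fin n) ℝ) (hZ : Z = κ • vecMulVec vi vj + vecMulVec vj vi) :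
    (-γ) • Zᵀ + (2 : ℝ) • (Z * Sig) - γ • (Sig⁻¹ * Z * Sig)
      = (2 * si - γ * (si / sj + κ)) • Z := by
  have hsj0 : 0 < sj := hγ.trans hsj
  have hsi0 : 0 < si := lt_of_lt_of_le hsj0 hij
  have hsym : Sigᵀ = Sig := hSig.isHermitian.eq
  set A := vecMulVec vi vj with hA
  set B := vecMulVec vj vi with hB
  have hAT : Aᵀ = B := by ext i k; simp [hA, hB, vecMulVec_apply, mul_comm]
  have hBT : Bᵀ = A := by ext i k; simp [hA, hB, vecMulVec_apply, mul_comm]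
  -- inverse action
  have hdet : IsUnit Sig.det := isUnit_iff_ne_zero.mpr hSig.det_pos.ne'
  have hinv : ∀ (v : Fin n → ℝ) (s : ℝ), 0 < s → Sig *ᵥ v = s • v →
      Sig⁻¹ *ᵥ v = s⁻¹ • v := by
    intro v s hs he
    have h1 : Sig⁻¹ *ᵥ (Sig *ᵥ v) = v := by
      rw [mulVec_mulVec, nonsing_inv_mul Sig hdet, one_mulVec]
    rw [he, mulVec_smul] at h1
    have := congrArg (fun w => s⁻¹ • w) h1
    simpa [smul_smul, inv_mul_cancel₀ hs.ne'] using this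
  have hinvi := hinv vi si hsi0 heigi
  have hinvj := hinv vj sj hsj0 heigj
  -- products
  have hAS : A * Sig = sj • A := by
    rw [← transpose_transpose (A * Sig), transpose_mul, hsym, hAT, hB, mul_vecMulVec',
      heigj]
    ext i k; simp [vecMulVec_apply, hA]; ring_nf; simp
  have hBS : B * Sig = si • B := by
    rw [← transpose_transpose (B * Sig), transpose_mul, hsym, hBT, hA, mul_vecMulVec',
      heigi]
    ext i k; simp [vecMulVec_apply, hB]; ring_nf; simp
  have hSA : Sig⁻¹ * A = si⁻¹ • A := by
    rw [hA, mul_vecMulVec', hinvi]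
    ext i k; simp [vecMulVec_apply, mul_assoc]
  have hSB : Sig⁻¹ * B = sj⁻¹ • B := by
    rw [hB, mul_vecMulVec', hinvj]
    ext i k; simp [vecMulVec_apply, mul_assoc]
  -- κ quadratic
  have hsq : Real.sqrt (1 + b ^ 2) ^ 2 = 1 + b ^ 2 :=
    Real.sq_sqrt (by positivity)
  have hκ2 : κ ^ 2 = 2 * b * κ + 1 := by
    rw [hκ]; nlinarith [hsq]
  have h1 : Zᵀ = κ • B + A := by
    rw [hZ, transpose_add, transpose_smul, hAT, hBT]
  have h2 : Z * Sig = (κ * sj) • A + si • B := by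
    rw [hZ, add_mul, smul_mul_assoc, hAS, hBS, smul_smul]
  have h3 : Sig⁻¹ * Z * Sig = (κ * si⁻¹ * sj) • A + (sj⁻¹ * si) • B := by
    rw [hZ, mul_add, Matrix.mul_smul, hSA, hSB]
    simp only [add_mul, smul_mul_assoc, hAS, hBS]
    module
  rw [h1, h2, h3, hZ]
  have hb' : 2 * γ * b * si * sj = 2 * si * sj * (si - sj) - γ * (si + sj) * (si - sj) := by
    rw [hb]; field_simp
  match_scalars
  · field_simp
    ring
  · field_simp
    linear_combination (γ*si*sj) * hκ2 + κ * hb'
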